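/- For every graph H that is not a forest, and every ε > 0, there exists an H-free graph G with |G| > 1 such that every vertex of G has degree less than ε|G| and there are no two disjoint anticomplete vertex subsets each of size at least ε|G|. Equivalently: if for some ε > 0 every ε-coherent graph contains H as an induced subgraph, then H is a forest. -/

import Mathlib

open Finset

open scoped Classical

variable {V : Type*}

/-- No edges between `A` and `B`. -/
def Anticomplete (G : SimpleGraph V) (A B : Finset V) : Prop :=
  ∀ a ∈ A, ∀ b ∈ B, ¬ G.Adj a b

/-- All edges between `A` and `B` are present. -/
def CompletePair (G : SimpleGraph V) (A B : Finset V) : Prop :=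
  ∀ a ∈ A, ∀ b ∈ B, G.Adj a b

/-- `G` is `ε`-coherent. -/
def Coherent (G : SimpleGraph V) [Fintype V] (ε : ℝ) : Prop :=
  1 < Fintype.card V ∧
  (∀ v : V, (G.degree v : ℝ) < ε * Fintype.card V) ∧
  ¬ ∃ A B : Finset V, Disjoint A B ∧ Anticomplete G A B ∧
      ε * Fintype.card V ≤ A.card ∧ ε * Fintype.card V ≤ B.card

/-- `G` contains an induced copy of `H`. -/
def Contains {W : Type*} (G : SimpleGraph V) (H : SimpleGraph W) : Prop :=
  ∃ f : W ↪ V, ∀ a b, G.Adj (f a) (f b) ↔ H.Adj a b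

/-- Size of the largest clique. -/
noncomputable def cliqueNumber (G : SimpleGraph V) [Fintype V] : ℕ :=
  sSup {n | ∃ s : Finset V, G.IsNClique n s}

/-- A blockade: pairwise disjoint nonempty blocks. -/
def IsBlockade {K : ℕ} (B : Fin K → Finset V) : Prop :=
  (∀ i, (B i).Nonempty) ∧ Pairwise fun i j => Disjoint (B i) (B j)

/-- Width of a blockade: minimum block size. -/
noncomputable def blockWidth {K : ℕ} (B : Fin K → Finset V) : ℕ :=
  ⨅ i, (B i).card

/-- A rainbow copy of the ordered graph `J` with blocks given by the strictly
monotone map `ι`. -/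
def RainbowCopy (G : SimpleGraph V) {K : ℕ} (B : Fin K → Finset V) {m : ℕ}
    (J : SimpleGraph (Fin m)) (ι : Fin m → Fin K) : Prop :=
  StrictMono ι ∧ ∃ f : Fin m → V, (∀ a, f a ∈ B (ι a)) ∧
    ∀ a b, G.Adj (f a) (f b) ↔ J.Adj a b

/-- The trace of the ordered graph `J` relative to a blockade. -/
def Trace (G : SimpleGraph V) {K : ℕ} (B : Fin K → Finset V) {m : ℕ}
    (J : SimpleGraph (Fin m)) : Set (Fin m → Fin K) :=
  {ι | RainbowCopy G B J ι}

/-- `τ`-support-uniform: for every ordered tree with at most `τ` vertices, the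
trace is empty or everything. -/
def SupportUniform (G : SimpleGraph V) {K : ℕ} (B : Fin K → Finset V) (τ : ℕ) : Prop :=
  ∀ m : ℕ, m ≤ τ → ∀ J : SimpleGraph (Fin m), J.IsTree →
    Trace G B J = ∅ ∨ Trace G B J = {ι | StrictMono ι}

/-- `B'` is a contraction of `B`. -/
def IsContraction {K : ℕ} (B' B : Fin K → Finset V) : Prop :=
  ∀ i, (B' i).Nonempty ∧ B' i ⊆ B i

/-- `(κ, τ)`-support-invariant: contractions of width at least `κ` times the
width have the same traces of ordered trees with at most `τ` vertices. -/
def SupportInvariant (G : SimpleGraph V) {K : ℕ} (B : Fin K → Finset V)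
    (κ : ℝ) (τ : ℕ) : Prop :=
  ∀ B' : Fin K → Finset V, IsContraction B' B →
    (∀ i, κ * blockWidth B ≤ ((B' i).card : ℝ)) →
    ∀ m : ℕ, m ≤ τ → ∀ J : SimpleGraph (Fin m), J.IsTree →
      Trace G B' J = Trace G B J

/-- `X` `lam`-covers the block `Bi` (with respect to width `w`). -/
def Covers (G : SimpleGraph V) (X Bi : Finset V) (lam : ℝ) (w : ℕ) : Prop :=
  lam * w ≤ ((Bi.filter fun v => ∃ x ∈ X, G.Adj x v).card : ℝ)

/-- `X` `lam`-misses the block `Bi` (with respect to width `w`). -/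
def Misses (G : SimpleGraph V) (X Bi : Finset V) (lam : ℝ) (w : ℕ) : Prop :=
  lam * w ≤ ((Bi.filter fun v => ∀ x ∈ X, ¬ G.Adj x v).card : ℝ)

/-- `lam`-concave (for an equicardinal blockade of width `w`). -/
def Concave (G : SimpleGraph V) {K : ℕ} (B : Fin K → Finset V) (lam : ℝ) (w : ℕ) : Prop :=
  ∀ h1 h2 h3 : Fin K, h1 < h2 → h2 < h3 →
    ∀ X : Finset V,
      (∀ x ∈ X, ∃ i : Fin K, i ≠ h1 ∧ i ≠ h2 ∧ i ≠ h3 ∧ x ∈ B i) →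
      ¬ (Covers G X (B h2) lam w ∧ Misses G X (B h1) lam w ∧ Misses G X (B h3) lam w)

/-- `G` contains a `B`-rainbow induced copy of `T`. -/
def RainbowContains (G : SimpleGraph V) {K : ℕ} (B : Fin K → Finset V)
    {W' : Type*} (T : SimpleGraph W') : Prop :=
  ∃ f : W' ↪ V,
    (∀ a b, G.Adj (f a) (f b) ↔ T.Adj a b) ∧
    (∀ a, ∃ i, f a ∈ B i) ∧
    ∀ a b, a ≠ b → ∀ i, f a ∈ B i → f b ∉ B i

/-- Vertices of the tree `T(δ, η)`: sequences of length at most `η` over `Fin δ`. -/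
def Tvert (δ η : ℕ) : Type := {l : List (Fin δ) // l.length ≤ η}

/-- The tree `T(δ, η)` rooted at the empty sequence: every vertex of depth
`< η` has exactly `δ` children, and all leaves are at depth exactly `η`. -/
def Ttree (δ η : ℕ) : SimpleGraph (Tvert δ η) :=
  SimpleGraph.fromRel fun a b => ∃ x : Fin δ, b.1 = x :: a.1

set_option maxHeartbeats 1000000

open SimpleGraph in
def cycNext {ℓ : ℕ} (i : Fin ℓ) : Fin ℓ := ⟨(i.1 + 1) % ℓ, Nat.mod_lt _ i.pos⟩

def IsCycF {α : Type*} (G : SimpleGraph α) (ℓ : ℕ) (c : Fin ℓ → α) : Prop :=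
  Function.Injective c ∧ ∀ i : Fin ℓ, G.Adj (c i) (c (cycNext i))


lemma card_constrained {α β : Type*} [Fintype α] [Fintype β] [DecidableEq α] [DecidableEq β]
    (S : Finset α) (t : Finset β) :
    ((univ : Finset (α → β)).filter fun f => ∀ a ∈ S, f a ∈ t).card
      = t.card ^ S.card * (Fintype.card β) ^ (Fintype.card α - S.card) := by
  have h1 : ((univ : Finset (α → β)).filter fun f => ∀ a ∈ S, f a ∈ t)
      = Fintype.piFinset (fun a => if a ∈ S then t else univ) := by
    ext f
    simp only [mem_filter, mem_univ, true_and, Fintype.mem_piFinset]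
    constructor
    · intro h a
      by_cases ha : a ∈ S
      · simpa [ha] using h a ha
      · simp [ha]
    · intro h a ha
      simpa [ha] using h a
  rw [h1, Fintype.card_piFinset, ← Finset.prod_mul_prod_compl S]
  have h2 : (∏ a ∈ S, (if a ∈ S then t else univ).card) = t.card ^ S.card := by
    rw [Finset.prod_congr rfl (fun a ha => by rw [if_pos ha]), Finset.prod_const]
  have h3 : (∏ a ∈ Sᶜ, (if a ∈ S then t else univ).card)
      = (Fintype.card β) ^ (Fintype.card α - S.card) := by
    rw [Finset.prod_congr rfl (fun a ha => by rw [if_neg (Finset.mem_compl.mp ha)]),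
      Finset.prod_const, Finset.card_univ, Finset.card_compl]
  rw [h2, h3]


lemma two_mul_pred_pow_le {M : ℕ} (hM : 2 ≤ M) : 2 * (M - 1) ^ M ≤ M ^ M := by
  have h2 : (2:ℝ) ≤ (M:ℝ) := by exact_mod_cast hM
  have hx : (1:ℝ) ≤ (M:ℝ) - 1 := by linarith
  have hxpos : (0:ℝ) < (M:ℝ) - 1 := by linarith
  set x : ℝ := (M:ℝ) - 1 with hxdef
  have hge : (-2:ℝ) ≤ 1/x := by
    have : (0:ℝ) ≤ 1/x := by positivity
    linarith
  have key : 1 + (M:ℕ) * (1/x) ≤ (1 + 1/x) ^ (M:ℕ) := one_add_mul_le_pow hge M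
  have h1x : (1:ℝ) ≤ (M:ℝ) * (1/x) := by
    rw [mul_one_div, le_div_iff₀ hxpos]
    linarith
  have h2le : (2:ℝ) ≤ (1 + 1/x) ^ (M:ℕ) := by
    calc (2:ℝ) = 1 + 1 := by norm_num
      _ ≤ 1 + (M:ℕ) * (1/x) := by push_cast; linarith
      _ ≤ _ := key
  have hform : (1 + 1/x) = (M:ℝ)/x := by
    rw [eq_div_iff hxpos.ne', add_mul, one_div_mul_cancel hxpos.ne', hxdef]; ring
  rw [hform, div_pow, le_div_iff₀ (by positivity)] at h2le
  have hfin : 2 * x ^ M ≤ (M:ℝ) ^ M := h2le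
  have hcast : ((M - 1 : ℕ) : ℝ) = x := by
    rw [hxdef]; push_cast [Nat.cast_sub (by omega : 1 ≤ M)]; ring
  have : ((2 * (M - 1) ^ M : ℕ) : ℝ) ≤ ((M ^ M : ℕ) : ℝ) := by
    push_cast [hcast]
    exact hfin
  exact_mod_cast this


lemma pow_div_mul_le {M : ℕ} (hM : 2 ≤ M) : ∀ s : ℕ, 2 ^ (s / M) * (M - 1) ^ s ≤ M ^ s := by
  intro s
  induction s using Nat.strong_induction_on with
  | _ s ih =>
    rcases lt_or_ge s M with h | h
    · rw [Nat.div_eq_of_lt h, pow_zero, one_mul]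
      exact Nat.pow_le_pow_left (by omega) s
    · obtain ⟨s', rfl⟩ : ∃ s', s = s' + M := ⟨s - M, by omega⟩
      have hdiv : (s' + M) / M = s' / M + 1 := by
        rw [Nat.add_div_right _ (by omega)]
      rw [hdiv, pow_succ, pow_add, pow_add]
      calc 2 ^ (s'/M) * 2 * ((M-1)^s' * (M-1)^M)
          = (2 ^ (s'/M) * (M-1)^s') * (2 * (M-1)^M) := by ring
        _ ≤ M ^ s' * M ^ M := Nat.mul_le_mul (ih s' (by omega)) (two_mul_pred_pow_le hM)

open SimpleGraph in
def graphOf (n M : ℕ) (f : Sym2 (Fin n) → Fin M) : SimpleGraph (Fin n) where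
  Adj u v := u ≠ v ∧ (f s(u, v)).1 = 0
  symm := by
    constructor
    rintro u v ⟨h1, h2⟩
    refine ⟨h1.symm, ?_⟩
    rw [Sym2.eq_swap]
    exact h2
  loopless := ⟨fun u h => h.1 rfl⟩


open SimpleGraph in
def pruned {n : ℕ} (G₀ : SimpleGraph (Fin n)) (T : Finset (Fin n)) : SimpleGraph (Fin n) where
  Adj u v := G₀.Adj u v ∧ u ∉ T ∧ v ∉ T
  symm := by constructor; rintro u v ⟨h, hu, hv⟩; exact ⟨h.symm, hv, hu⟩
  loopless := ⟨fun u h => G₀.loopless.irrefl u h.1⟩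


lemma cycEdge_injective {α : Type*} {ℓ : ℕ} (h3 : 3 ≤ ℓ) {c : Fin ℓ → α}
    (hc : Function.Injective c) :
    Function.Injective (fun i : Fin ℓ => s(c i, c (cycNext i))) := by
  intro i j h
  simp only [Sym2.eq_iff] at h
  rcases h with ⟨h1, h2⟩ | ⟨h1, h2⟩
  · exact hc h1
  · exfalso
    have hij : i = cycNext j := hc h1
    have hji : cycNext i = j := hc h2
    have e1 : i.1 = (j.1 + 1) % ℓ := congrArg Fin.val hij
    have e2 : j.1 = (i.1 + 1) % ℓ := (congrArg Fin.val hji).symm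
    have hi := i.2; have hj := j.2
    rcases Nat.lt_or_ge (j.1 + 1) ℓ with h | h
    · rw [Nat.mod_eq_of_lt h] at e1
      rcases Nat.lt_or_ge (i.1 + 1) ℓ with h' | h'
      · rw [Nat.mod_eq_of_lt h'] at e2; omega
      · have hh : i.1 + 1 = ℓ := by omega
        rw [hh, Nat.mod_self] at e2; omega
    · have hh : j.1 + 1 = ℓ := by omega
      rw [hh, Nat.mod_self] at e1
      rcases Nat.lt_or_ge (i.1 + 1) ℓ with h' | h'
      · rw [Nat.mod_eq_of_lt h'] at e2; omega
      · have hh' : i.1 + 1 = ℓ := by omega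
        rw [hh', Nat.mod_self] at e2; omega


lemma count_template_le {n M ℓ : ℕ} (hM : 1 ≤ M) (h3 : 3 ≤ ℓ) (c : Fin ℓ → Fin n) :
    ((univ : Finset (Sym2 (Fin n) → Fin M)).filter
        (fun f => IsCycF (graphOf n M f) ℓ c)).card
      ≤ M ^ (Fintype.card (Sym2 (Fin n)) - ℓ) := by
  by_cases hc : Function.Injective c
  · set S : Finset (Sym2 (Fin n)) := univ.image (fun i : Fin ℓ => s(c i, c (cycNext i))) with hS
    have hScard : S.card = ℓ := by
      rw [hS, Finset.card_image_of_injective _ (cycEdge_injective h3 hc), card_univ,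
        Fintype.card_fin]
    set t : Finset (Fin M) := univ.filter (fun x => x.1 = 0) with htdef
    have ht : t.card ≤ 1 := by
      have hsub : t ⊆ {(⟨0, by omega⟩ : Fin M)} := by
        intro x hx
        simp only [htdef, mem_filter, mem_univ, true_and] at hx
        simp only [mem_singleton]
        exact Fin.ext hx
      calc t.card ≤ _ := card_le_card hsub
        _ = 1 := card_singleton _
    have hsub : ((univ : Finset (Sym2 (Fin n) → Fin M)).filter
          (fun f => IsCycF (graphOf n M f) ℓ c))
        ⊆ (univ.filter fun f => ∀ e ∈ S, f e ∈ t) := by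
      intro f hf
      simp only [mem_filter, mem_univ, true_and] at hf ⊢
      intro e he
      simp only [hS, mem_image, mem_univ, true_and] at he
      obtain ⟨i, rfl⟩ := he
      have := hf.2 i
      simp only [htdef, mem_filter, mem_univ, true_and]
      exact (this : _ ∧ _).2
    calc ((univ : Finset (Sym2 (Fin n) → Fin M)).filter
          (fun f => IsCycF (graphOf n M f) ℓ c)).card
        ≤ _ := card_le_card hsub
      _ = t.card ^ S.card * (Fintype.card (Fin M)) ^ (Fintype.card (Sym2 (Fin n)) - S.card) :=
          card_constrained S t
      _ ≤ 1 ^ ℓ * M ^ (Fintype.card (Sym2 (Fin n)) - ℓ) := by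
          rw [hScard, Fintype.card_fin]
          exact Nat.mul_le_mul_right _ (Nat.pow_le_pow_left ht _)
      _ = M ^ (Fintype.card (Sym2 (Fin n)) - ℓ) := by rw [one_pow, one_mul]
  · have : ((univ : Finset (Sym2 (Fin n) → Fin M)).filter
        (fun f => IsCycF (graphOf n M f) ℓ c)) = ∅ := by
      refine Finset.filter_false_of_mem ?_
      intro f _ hf
      exact hc hf.1
    rw [this]
    simp


lemma sum_cycCount_le {n M ℓ : ℕ} (hM : 1 ≤ M) (h3 : 3 ≤ ℓ) :
    (∑ f : Sym2 (Fin n) → Fin M, ((univ : Finset (Fin ℓ → Fin n)).filter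
        (fun c => IsCycF (graphOf n M f) ℓ c)).card)
      ≤ n ^ ℓ * M ^ (Fintype.card (Sym2 (Fin n)) - ℓ) := by
  have swap : (∑ f : Sym2 (Fin n) → Fin M, ((univ : Finset (Fin ℓ → Fin n)).filter
        (fun c => IsCycF (graphOf n M f) ℓ c)).card)
      = ∑ c : Fin ℓ → Fin n, ((univ : Finset (Sym2 (Fin n) → Fin M)).filter
          (fun f => IsCycF (graphOf n M f) ℓ c)).card := by
    simp only [Finset.card_filter]
    rw [Finset.sum_comm]
  rw [swap]
  calc (∑ c : Fin ℓ → Fin n, ((univ : Finset (Sym2 (Fin n) → Fin M)).filter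
          (fun f => IsCycF (graphOf n M f) ℓ c)).card)
      ≤ ∑ _c : Fin ℓ → Fin n, M ^ (Fintype.card (Sym2 (Fin n)) - ℓ) :=
        Finset.sum_le_sum (fun c _ => count_template_le hM h3 c)
    _ = n ^ ℓ * M ^ (Fintype.card (Sym2 (Fin n)) - ℓ) := by
        rw [Finset.sum_const, card_univ, smul_eq_mul]
        congr 1
        simp [Fintype.card_fun]

/-- counting functions with value-constraints on a set of edges -/
lemma count_zero_le {n M : ℕ} (hM : 0 < M) (S' : Finset (Sym2 (Fin n))) :
    ((univ : Finset (Sym2 (Fin n) → Fin M)).filter (fun f => ∀ e ∈ S', (f e).1 = 0)).card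
      ≤ M ^ (Fintype.card (Sym2 (Fin n)) - S'.card) := by
  set t : Finset (Fin M) := univ.filter (fun x => x.1 = 0) with htdef
  have heq : ((univ : Finset (Sym2 (Fin n) → Fin M)).filter (fun f => ∀ e ∈ S', (f e).1 = 0))
      = ((univ : Finset (Sym2 (Fin n) → Fin M)).filter (fun f => ∀ e ∈ S', f e ∈ t)) := by
    ext f
    simp only [mem_filter, mem_univ, true_and, htdef]
  have ht : t.card ≤ 1 := by
    have hsub1 : t ⊆ {(⟨0, hM⟩ : Fin M)} := by
      intro x hx
      simp only [htdef, mem_filter, mem_univ, true_and] at hx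
      simp only [mem_singleton]
      exact Fin.ext hx
    calc t.card ≤ _ := card_le_card hsub1
      _ = 1 := card_singleton _
  calc ((univ : Finset (Sym2 (Fin n) → Fin M)).filter (fun f => ∀ e ∈ S', (f e).1 = 0)).card
      = t.card ^ S'.card * (Fintype.card (Fin M)) ^ (Fintype.card (Sym2 (Fin n)) - S'.card) := by
        rw [heq]; exact card_constrained S' t
    _ ≤ 1 ^ S'.card * M ^ (Fintype.card (Sym2 (Fin n)) - S'.card) := by
        rw [Fintype.card_fin]
        exact Nat.mul_le_mul_right _ (Nat.pow_le_pow_left ht _)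
    _ = M ^ (Fintype.card (Sym2 (Fin n)) - S'.card) := by rw [one_pow, one_mul]

lemma count_nonzero_le {n M : ℕ} (hM : 0 < M) (S' : Finset (Sym2 (Fin n))) :
    ((univ : Finset (Sym2 (Fin n) → Fin M)).filter (fun f => ∀ e ∈ S', (f e).1 ≠ 0)).card
      ≤ (M-1) ^ S'.card * M ^ (Fintype.card (Sym2 (Fin n)) - S'.card) := by
  set t : Finset (Fin M) := univ.filter (fun x => x.1 ≠ 0) with htdef
  have heq : ((univ : Finset (Sym2 (Fin n) → Fin M)).filter (fun f => ∀ e ∈ S', (f e).1 ≠ 0))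
      = ((univ : Finset (Sym2 (Fin n) → Fin M)).filter (fun f => ∀ e ∈ S', f e ∈ t)) := by
    ext f
    simp only [mem_filter, mem_univ, true_and, htdef]
  have ht : t.card ≤ M - 1 := by
    have hsub1 : t ⊆ (univ : Finset (Fin M)).erase ⟨0, hM⟩ := by
      intro x hx
      simp only [htdef, mem_filter, mem_univ, true_and] at hx
      refine Finset.mem_erase.mpr ⟨?_, mem_univ _⟩
      intro h
      exact hx (by rw [h])
    calc t.card ≤ _ := card_le_card hsub1
      _ = M - 1 := by rw [Finset.card_erase_of_mem (mem_univ _), card_univ, Fintype.card_fin]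
  calc ((univ : Finset (Sym2 (Fin n) → Fin M)).filter (fun f => ∀ e ∈ S', (f e).1 ≠ 0)).card
      = t.card ^ S'.card * (Fintype.card (Fin M)) ^ (Fintype.card (Sym2 (Fin n)) - S'.card) := by
        rw [heq]; exact card_constrained S' t
    _ ≤ (M-1) ^ S'.card * M ^ (Fintype.card (Sym2 (Fin n)) - S'.card) := by
        rw [Fintype.card_fin]
        exact Nat.mul_le_mul_right _ (Nat.pow_le_pow_left ht _)


open SimpleGraph in
lemma walk_support_getElem {α : Type*} {G : SimpleGraph α} {u v : α} (p : G.Walk u v) :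
    ∀ (i : ℕ) (hi : i < p.support.length), p.support[i] = p.getVert i := by
  induction p with
  | nil =>
    intro i hi
    simp only [Walk.support_nil, List.length_singleton] at hi
    obtain rfl : i = 0 := by omega
    simp [Walk.support_nil]
  | cons h q ih =>
    intro i hi
    cases i with
    | zero => simp [Walk.support_cons]
    | succ j =>
      simp only [Walk.support_cons, List.length_cons] at hi
      simp only [Walk.support_cons, List.getElem_cons_succ, Walk.getVert_cons_succ]
      exact ih j (by omega)


open SimpleGraph in
lemma isCycF_of_cycle {α : Type*} [Fintype α] {G : SimpleGraph α} {v : α} {p : G.Walk v v}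
    (hp : p.IsCycle) :
    3 ≤ p.length ∧ p.length ≤ Fintype.card α ∧
      IsCycF G p.length (fun i => p.getVert i.1) := by
  have h3 := hp.three_le_length
  have hlsupp : p.support.length = p.length + 1 := p.length_support
  have htail : p.support.tail.length = p.length := by
    rw [List.length_tail, hlsupp]; omega
  have hnd : p.support.tail.Nodup := hp.support_nodup
  refine ⟨h3, by rw [← htail]; exact hnd.length_le_card, ?_, ?_⟩
  · -- injectivity
    have htl : ∀ (t : ℕ) (ht : t < p.length), p.support.tail[t] = p.getVert (t+1) := by
      intro t ht
      rw [List.getElem_tail, walk_support_getElem p (t+1) (by omega)]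
    intro i j hij
    simp only at hij
    by_cases hi0 : i.1 = 0
    · by_cases hj0 : j.1 = 0
      · exact Fin.ext (by omega)
      · exfalso
        have h1 : p.getVert p.length = p.getVert j.1 := by
          rw [Walk.getVert_length, ← hij, hi0]
          exact (Walk.getVert_zero p).symm
        have h2 : p.support.tail[p.length - 1]'(by omega) = p.support.tail[j.1 - 1]'(by omega) := by
          rw [htl _ (by omega), htl _ (by have := j.2; omega)]
          have e1 : p.length - 1 + 1 = p.length := by omega
          have e2 : j.1 - 1 + 1 = j.1 := by omega
          rw [e1, e2]; exact h1
        have := (hnd.getElem_inj_iff).mp h2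
        have := j.2
        omega
    · by_cases hj0 : j.1 = 0
      · exfalso
        have h1 : p.getVert p.length = p.getVert i.1 := by
          rw [Walk.getVert_length, hij, hj0]
          exact (Walk.getVert_zero p).symm
        have h2 : p.support.tail[p.length - 1]'(by omega) = p.support.tail[i.1 - 1]'(by omega) := by
          rw [htl _ (by omega), htl _ (by have := i.2; omega)]
          have e1 : p.length - 1 + 1 = p.length := by omega
          have e2 : i.1 - 1 + 1 = i.1 := by omega
          rw [e1, e2]; exact h1
        have := (hnd.getElem_inj_iff).mp h2
        have := i.2
        omega
      · have h2 : p.support.tail[i.1 - 1]'(by have := i.2; omega)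
            = p.support.tail[j.1 - 1]'(by have := j.2; omega) := by
          rw [htl _ (by have := i.2; omega), htl _ (by have := j.2; omega)]
          have e1 : i.1 - 1 + 1 = i.1 := by omega
          have e2 : j.1 - 1 + 1 = j.1 := by omega
          rw [e1, e2]; exact hij
        have := (hnd.getElem_inj_iff).mp h2
        exact Fin.ext (by omega)
  · -- adjacency
    intro i
    have hi := i.2
    simp only [cycNext]
    by_cases hlt : i.1 + 1 < p.length
    · rw [Nat.mod_eq_of_lt hlt]
      exact p.adj_getVert_succ (by omega)
    · have he : i.1 + 1 = p.length := by omega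
      have : (i.1 + 1) % p.length = 0 := by rw [he, Nat.mod_self]
      rw [this]
      have := p.adj_getVert_succ (i := i.1) (by omega)
      rw [he, Walk.getVert_length] at this
      rwa [Walk.getVert_zero]

open SimpleGraph in
lemma main_construction (ε : ℝ) (hε : 0 < ε) (k : ℕ) :
    ∃ (n : ℕ) (G : SimpleGraph (Fin n)), Coherent G ε ∧
      ∀ ℓ : ℕ, 3 ≤ ℓ → ℓ ≤ k → ∀ c : Fin ℓ → Fin n, ¬ IsCycF G ℓ c := by
  classical
  -- parameters
  set d : ℕ := ⌈(16:ℝ)/ε^2⌉₊ with hddef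
  have hd1 : 1 ≤ d := Nat.one_le_iff_ne_zero.mpr (by
    have : 0 < d := Nat.ceil_pos.mpr (by positivity)
    omega)
  have hdr : (16:ℝ)/ε^2 ≤ (d:ℝ) := Nat.le_ceil _
  set C0 : ℕ := (k+1) * d^k with hC0def
  set Q : ℕ := 2 * C0 with hQdef
  set e8 : ℕ := ⌈(8:ℝ)/ε⌉₊ with he8def
  have he8r : (8:ℝ)/ε ≤ (e8:ℝ) := Nat.le_ceil _
  set M : ℕ := max (max (2 ^ e8) (⌈(2*((Q:ℝ)+1))/(ε*d)⌉₊ + 1)) (max k 3) with hMdef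
  have hM3 : 3 ≤ M := le_trans (le_max_right k 3) (le_max_right _ _)
  have hMk : k ≤ M := le_trans (le_max_left k 3) (le_max_right _ _)
  have hM8 : 2 ^ e8 ≤ M := le_trans (le_max_left _ _) (le_max_left _ _)
  have hMQ : (⌈(2*((Q:ℝ)+1))/(ε*d)⌉₊ + 1 : ℕ) ≤ M :=
    le_trans (le_max_right _ _) (le_max_left _ _)
  set n : ℕ := d * M with hndef
  have hnM : M ≤ n := Nat.le_mul_of_pos_left M hd1
  have hn3 : 3 ≤ n := le_trans hM3 hnM
  have hdpos : (0:ℝ) < (d:ℝ) := by exact_mod_cast hd1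
  have hnr : (n:ℝ) = (d:ℝ) * (M:ℝ) := by rw [hndef]; push_cast; ring
  -- real facts
  have hQε : (Q:ℝ) + 1 ≤ ε * n / 2 := by
    have h1 : (2*((Q:ℝ)+1))/(ε*d) < (M:ℝ) := by
      have := Nat.le_ceil ((2*((Q:ℝ)+1))/(ε*d))
      have h2 : ((⌈(2*((Q:ℝ)+1))/(ε*d)⌉₊ : ℕ) : ℝ) + 1 ≤ (M:ℝ) := by exact_mod_cast hMQ
      linarith
    have hεd : (0:ℝ) < ε * d := by positivity
    rw [div_lt_iff₀ hεd] at h1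
    rw [hnr]
    nlinarith
  have hεn2 : (2:ℝ) ≤ ε * n := by
    have : (0:ℝ) ≤ Q := Nat.cast_nonneg _
    linarith
  set m : ℕ := ⌈ε * n / 2⌉₊ with hmdef
  have hmlow : ε * n / 2 ≤ (m:ℝ) := Nat.le_ceil _
  have hmup : (m:ℝ) ≤ ε * n / 2 + 1 := by
    have := Nat.ceil_lt_add_one (show (0:ℝ) ≤ ε * n / 2 by positivity)
    linarith
  have hmεn : (m:ℝ) ≤ ε * n := by linarith
  have hm1 : 1 ≤ m := by
    have : (0:ℝ) < (m:ℝ) := by linarith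
    exact_mod_cast Nat.one_le_iff_ne_zero.mpr (by
      intro h; rw [h] at this; norm_num at this)
  have hMr : (3:ℝ) ≤ (M:ℝ) := by exact_mod_cast hM3
  have hm2M : (2*n+3) * M ≤ m * m := by
    have hr : ((2*n+3) * M : ℝ) ≤ (m:ℝ) * (m:ℝ) := by
      have h1 : (m:ℝ) * (m:ℝ) ≥ (ε * n / 2) * (ε * n / 2) := by nlinarith
      have h2 : ε^2 * d ≥ 16 := by
        have := mul_le_mul_of_nonneg_left hdr (le_of_lt (by positivity : (0:ℝ) < ε^2))
        calc ε^2 * (d:ℝ) ≥ ε^2 * (16/ε^2) := by nlinarith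
          _ = 16 := by field_simp
      have hnr3 : (3:ℝ) ≤ (n:ℝ) := by exact_mod_cast hn3
      have hMpos : (0:ℝ) < (M:ℝ) := by linarith
      -- (εn/2)^2 = ε²n²/4 = (ε²d/4)·d·M² ≥ 4 d M² = 4nM ≥ (2n+3)M
      have key : (ε * n / 2) * (ε * n / 2) ≥ 4 * (n:ℝ) * M := by
        rw [hnr]
        nlinarith [sq_nonneg ((M:ℝ)), sq_nonneg ε, mul_pos hdpos hMpos]
      have last : ((2*n+3) * M : ℝ) ≤ 4 * (n:ℝ) * M := by
        push_cast
        nlinarith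
      push_cast at last ⊢
      nlinarith
    exact_mod_cast hr
  set NN : ℕ := Fintype.card (Sym2 (Fin n)) with hNNdef
  have hNn : n ≤ NN := by
    have := Fintype.card_le_of_injective (Sym2.diag : Fin n → Sym2 (Fin n)) Sym2.diag_injective
    rwa [Fintype.card_fin] at this
  have hkNN : k ≤ NN := le_trans hMk (le_trans hnM hNn)
  have hMpos : 0 < M := by omega
  have hMNNpos : 0 < M ^ NN := pow_pos hMpos _
  -- bad events
  set cycCount : (ℓ : ℕ) → (Sym2 (Fin n) → Fin M) → ℕ :=
    fun ℓ f => ((univ : Finset (Fin ℓ → Fin n)).filter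
      (fun c => IsCycF (graphOf n M f) ℓ c)).card with hccdef
  set tc : (Sym2 (Fin n) → Fin M) → ℕ := fun f => ∑ ℓ ∈ Finset.Icc 3 k, cycCount ℓ f with htcdef
  set Bad1 : Finset (Sym2 (Fin n) → Fin M) := univ.filter (fun f => Q + 1 ≤ tc f) with hB1def
  set BadD : Finset (Sym2 (Fin n) → Fin M) := univ.filter (fun f => ∃ v : Fin n,
    m ≤ ((univ : Finset (Fin n)).filter (fun w => (graphOf n M f).Adj v w)).card) with hBDdef
  set BadP : Finset (Sym2 (Fin n) → Fin M) := univ.filter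
    (fun f => ∃ AB : Finset (Fin n) × Finset (Fin n), Disjoint AB.1 AB.2 ∧
      AB.1.card = m ∧ AB.2.card = m ∧
      ∀ a ∈ AB.1, ∀ b ∈ AB.2, (f s(a, b)).1 ≠ 0) with hBPdef
  -- count Bad1
  have hBad1 : 2 * Bad1.card < M ^ NN := by
    have htot : (∑ f : Sym2 (Fin n) → Fin M, tc f) ≤ C0 * M ^ NN := by
      have hswap : (∑ f : Sym2 (Fin n) → Fin M, tc f)
          = ∑ ℓ ∈ Finset.Icc 3 k, ∑ f : Sym2 (Fin n) → Fin M, cycCount ℓ f := by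
        simp only [htcdef]
        exact Finset.sum_comm
      rw [hswap]
      have hper : ∀ ℓ ∈ Finset.Icc 3 k,
          (∑ f : Sym2 (Fin n) → Fin M, cycCount ℓ f) ≤ d^k * M^NN := by
        intro ℓ hℓ
        obtain ⟨h3ℓ, hℓk⟩ := Finset.mem_Icc.mp hℓ
        have h1 : (∑ f : Sym2 (Fin n) → Fin M, cycCount ℓ f) ≤ n ^ ℓ * M ^ (NN - ℓ) := by
          simp only [hccdef]
          exact sum_cycCount_le (by omega) h3ℓ
        have hℓNN : ℓ ≤ NN := le_trans hℓk hkNN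
        have h2 : n ^ ℓ * M ^ (NN - ℓ) = d^ℓ * M^NN := by
          calc n ^ ℓ * M ^ (NN - ℓ) = (d*M)^ℓ * M^(NN-ℓ) := by rw [hndef]
            _ = d^ℓ * (M^ℓ * M^(NN-ℓ)) := by rw [mul_pow]; ring
            _ = d^ℓ * M^NN := by rw [← pow_add, Nat.add_sub_cancel' hℓNN]
        have h3 : d^ℓ ≤ d^k := Nat.pow_le_pow_right hd1 hℓk
        calc (∑ f : Sym2 (Fin n) → Fin M, cycCount ℓ f) ≤ n^ℓ * M^(NN-ℓ) := h1
          _ = d^ℓ * M^NN := h2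
          _ ≤ d^k * M^NN := Nat.mul_le_mul_right _ h3
      calc (∑ ℓ ∈ Finset.Icc 3 k, ∑ f : Sym2 (Fin n) → Fin M, cycCount ℓ f)
          ≤ ∑ _ℓ ∈ Finset.Icc 3 k, d^k * M^NN := Finset.sum_le_sum hper
        _ = (Finset.Icc 3 k).card * (d^k * M^NN) := by rw [Finset.sum_const, smul_eq_mul]
        _ ≤ (k+1) * (d^k * M^NN) := Nat.mul_le_mul_right _ (by rw [Nat.card_Icc]; omega)
        _ = C0 * M^NN := by rw [hC0def]; ring
    have hmarkov : Bad1.card * (Q+1) ≤ ∑ f : Sym2 (Fin n) → Fin M, tc f := by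
      calc Bad1.card * (Q+1) = Bad1.card • (Q+1) := (smul_eq_mul ..).symm
        _ ≤ ∑ f ∈ Bad1, tc f :=
            Finset.card_nsmul_le_sum _ _ _ (fun f hf => (mem_filter.mp hf).2)
        _ ≤ ∑ f ∈ univ, tc f := Finset.sum_le_sum_of_subset (filter_subset _ _)
    have hkey : Bad1.card * (2*C0+1) ≤ C0 * M^NN := by
      rw [hQdef] at hmarkov
      exact le_trans hmarkov htot
    by_contra hcon
    push_neg at hcon
    have h1 : M^NN * (2*C0+1) ≤ 2*Bad1.card*(2*C0+1) := Nat.mul_le_mul_right _ hcon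
    have h2 : 2*(Bad1.card*(2*C0+1)) ≤ 2*(C0*M^NN) := Nat.mul_le_mul_left _ hkey
    have h4 : 2*(C0*M^NN) + M^NN ≤ 2*(C0*M^NN) := by
      calc 2*(C0*M^NN) + M^NN = M^NN*(2*C0+1) := by ring
        _ ≤ 2*Bad1.card*(2*C0+1) := h1
        _ = 2*(Bad1.card*(2*C0+1)) := by ring
        _ ≤ 2*(C0*M^NN) := h2
    omega
  -- count BadD
  have hBadD : 4 * BadD.card < M ^ NN := by
    by_cases hmn : n < m
    · have hempty : BadD = ∅ := by
        rw [hBDdef]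
        refine Finset.filter_false_of_mem ?_
        rintro f - ⟨v, hv⟩
        have hle := card_le_card
          (Finset.filter_subset (fun w => (graphOf n M f).Adj v w) univ)
        rw [card_univ, Fintype.card_fin] at hle
        omega
      rw [hempty]
      simpa using hMNNpos
    · push_neg at hmn
      have hmNN : m ≤ NN := le_trans hmn hNn
      have hcover : BadD ⊆ (univ : Finset (Fin n)).biUnion (fun v =>
          (Finset.powersetCard m (univ : Finset (Fin n))).biUnion (fun S =>
            univ.filter (fun f : Sym2 (Fin n) → Fin M => ∀ a ∈ S, (f s(v, a)).1 = 0))) := by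
        intro f hf
        obtain ⟨v, hv⟩ := (mem_filter.mp hf).2
        obtain ⟨S, hSsub, hScard⟩ := Finset.exists_subset_card_eq hv
        refine Finset.mem_biUnion.mpr ⟨v, mem_univ _, Finset.mem_biUnion.mpr
          ⟨S, Finset.mem_powersetCard.mpr ⟨Finset.subset_univ _, hScard⟩,
            mem_filter.mpr ⟨mem_univ _, ?_⟩⟩⟩
        intro a ha
        exact ((mem_filter.mp (hSsub ha)).2 : _ ∧ _).2
      have hper : ∀ v : Fin n, ∀ S ∈ Finset.powersetCard m (univ : Finset (Fin n)),
          ((univ : Finset (Sym2 (Fin n) → Fin M)).filter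
            (fun f => ∀ a ∈ S, (f s(v, a)).1 = 0)).card ≤ M ^ (NN - m) := by
        intro v S hS
        have hScard : S.card = m := (Finset.mem_powersetCard.mp hS).2
        set S' : Finset (Sym2 (Fin n)) := S.image (fun a => s(v, a)) with hS'def
        have hinj : Set.InjOn (fun a => s(v, a)) S := by
          intro a _ b _ hab
          simp only [Sym2.eq_iff] at hab
          rcases hab with ⟨-, h⟩ | ⟨h1, h2⟩
          · exact h
          · exact h2.trans h1
        have hS'card : S'.card = m := by
          rw [hS'def, Finset.card_image_of_injOn hinj, hScard]
        have heq : ((univ : Finset (Sym2 (Fin n) → Fin M)).filter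
              (fun f => ∀ a ∈ S, (f s(v, a)).1 = 0))
            = ((univ : Finset (Sym2 (Fin n) → Fin M)).filter
              (fun f => ∀ e ∈ S', (f e).1 = 0)) := by
          ext f
          simp only [mem_filter, mem_univ, true_and, hS'def]
          constructor
          · intro h e he
            obtain ⟨a, ha, rfl⟩ := Finset.mem_image.mp he
            exact h a ha
          · intro h a ha
            exact h _ (Finset.mem_image_of_mem _ ha)
        rw [heq]
        calc ((univ : Finset (Sym2 (Fin n) → Fin M)).filter
              (fun f => ∀ e ∈ S', (f e).1 = 0)).card
            ≤ M ^ (Fintype.card (Sym2 (Fin n)) - S'.card) := count_zero_le hMpos S'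
          _ = M ^ (NN - m) := by rw [hS'card, hNNdef]
      have hcount : BadD.card ≤ n * (2^n * M^(NN-m)) := by
        calc BadD.card
            ≤ ∑ v ∈ (univ : Finset (Fin n)), ((Finset.powersetCard m
                (univ : Finset (Fin n))).biUnion (fun S =>
                univ.filter (fun f : Sym2 (Fin n) → Fin M =>
                  ∀ a ∈ S, (f s(v, a)).1 = 0))).card :=
              le_trans (card_le_card hcover) Finset.card_biUnion_le
          _ ≤ ∑ _v ∈ (univ : Finset (Fin n)), 2^n * M^(NN-m) := by
              refine Finset.sum_le_sum ?_
              intro v _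
              calc ((Finset.powersetCard m (univ : Finset (Fin n))).biUnion (fun S =>
                    univ.filter (fun f : Sym2 (Fin n) → Fin M =>
                      ∀ a ∈ S, (f s(v, a)).1 = 0))).card
                  ≤ ∑ S ∈ Finset.powersetCard m (univ : Finset (Fin n)),
                      ((univ : Finset (Sym2 (Fin n) → Fin M)).filter
                        (fun f => ∀ a ∈ S, (f s(v, a)).1 = 0)).card :=
                    Finset.card_biUnion_le
                _ ≤ ∑ _S ∈ Finset.powersetCard m (univ : Finset (Fin n)), M^(NN-m) :=
                    Finset.sum_le_sum (hper v)
                _ = (Finset.powersetCard m (univ : Finset (Fin n))).card * M^(NN-m) := by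
                    rw [Finset.sum_const, smul_eq_mul]
                _ ≤ 2^n * M^(NN-m) := by
                    refine Nat.mul_le_mul_right _ ?_
                    have hsub2 : Finset.powersetCard m (univ : Finset (Fin n))
                        ⊆ Finset.powerset (univ : Finset (Fin n)) := by
                      intro S hS
                      exact Finset.mem_powerset.mpr (Finset.mem_powersetCard.mp hS).1
                    have := card_le_card hsub2
                    rwa [Finset.card_powerset, card_univ, Fintype.card_fin] at this
          _ = n * (2^n * M^(NN-m)) := by
              rw [Finset.sum_const, smul_eq_mul, card_univ, Fintype.card_fin]
      have h4n : 4*n*2^n < M^m := by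
        have he8m : 4*n ≤ e8*m := by
          have hr : ((4*n : ℕ) : ℝ) ≤ ((e8*m : ℕ) : ℝ) := by
            push_cast
            have h1 : (8:ℝ)/ε * (ε * n / 2) ≤ (e8:ℝ) * m := by
              apply mul_le_mul he8r hmlow (by positivity) (by positivity)
            have h2 : (8:ℝ)/ε * (ε * n / 2) = 4 * n := by
              field_simp
              ring
            linarith
          exact_mod_cast hr
        have hstep1 : 4*n*2^n < 2^(2*n+2) := by
          have hn2 : n < 2^n := Nat.lt_two_pow_self
          calc 4*n*2^n < 4*2^n*2^n := by
                have h4p : 0 < 2^n := pow_pos (by omega) n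
                exact (Nat.mul_lt_mul_right h4p).mpr (by omega)
            _ = 2^(2*n+2) := by ring
        have hstep2 : (2:ℕ)^(2*n+2) ≤ 2^(4*n) :=
          Nat.pow_le_pow_right (by omega) (by omega)
        have hstep3 : (2:ℕ)^(4*n) ≤ 2^(e8*m) :=
          Nat.pow_le_pow_right (by omega) he8m
        have hstep4 : (2:ℕ)^(e8*m) = (2^e8)^m := by rw [pow_mul]
        have hstep5 : ((2:ℕ)^e8)^m ≤ M^m := Nat.pow_le_pow_left hM8 m
        omega
      calc 4 * BadD.card ≤ 4 * (n * (2^n * M^(NN-m))) := by omega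
        _ = (4*n*2^n) * M^(NN-m) := by ring
        _ < M^m * M^(NN-m) := (Nat.mul_lt_mul_right (pow_pos hMpos _)).mpr h4n
        _ = M^NN := by rw [← pow_add, Nat.add_sub_cancel' hmNN]
  -- count BadP
  have hBadP : 4 * BadP.card < M ^ NN := by
    by_cases hex : BadP.Nonempty
    · -- from a witness, m*m ≤ NN
      obtain ⟨f₀, hf₀⟩ := hex
      obtain ⟨⟨A₀, B₀⟩, hd0, hA0, hB0, -⟩ := (mem_filter.mp hf₀).2
      have hprodcard : ∀ (A B : Finset (Fin n)), Disjoint A B → A.card = m → B.card = m →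
          ((A ×ˢ B).image (fun p : Fin n × Fin n => s(p.1, p.2))).card = m * m := by
        intro A B hd hA hB
        have hinj : Set.InjOn (fun p : Fin n × Fin n => s(p.1, p.2))
            ((A ×ˢ B : Finset (Fin n × Fin n)) : Set (Fin n × Fin n)) := by
          intro p hp q hq hpq
          obtain ⟨hp1, hp2⟩ := Finset.mem_product.mp (Finset.mem_coe.mp hp)
          obtain ⟨hq1, hq2⟩ := Finset.mem_product.mp (Finset.mem_coe.mp hq)
          simp only [Sym2.eq_iff] at hpq
          rcases hpq with ⟨h1, h2⟩ | ⟨h1, h2⟩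
          · exact Prod.ext h1 h2
          · exfalso
            exact (Finset.disjoint_left.mp hd hp1) (h1 ▸ hq2)
        rw [Finset.card_image_of_injOn hinj, Finset.card_product, hA, hB]
      have hmmNN : m * m ≤ NN := by
        have h1 := hprodcard A₀ B₀ hd0 hA0 hB0
        have h2 := card_le_card (Finset.subset_univ
          ((A₀ ×ˢ B₀).image (fun p : Fin n × Fin n => s(p.1, p.2))))
        rw [h1, card_univ] at h2
        exact h2
      have hcover : BadP ⊆ (univ : Finset (Finset (Fin n) × Finset (Fin n))).biUnion
          (fun AB => univ.filter (fun f : Sym2 (Fin n) → Fin M =>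
            Disjoint AB.1 AB.2 ∧ AB.1.card = m ∧ AB.2.card = m ∧
              ∀ a ∈ AB.1, ∀ b ∈ AB.2, (f s(a, b)).1 ≠ 0)) := by
        intro f hf
        obtain ⟨AB, hprop⟩ := (mem_filter.mp hf).2
        exact Finset.mem_biUnion.mpr ⟨AB, mem_univ _, mem_filter.mpr ⟨mem_univ _, hprop⟩⟩
      have hper : ∀ AB : Finset (Fin n) × Finset (Fin n),
          ((univ : Finset (Sym2 (Fin n) → Fin M)).filter (fun f =>
            Disjoint AB.1 AB.2 ∧ AB.1.card = m ∧ AB.2.card = m ∧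
              ∀ a ∈ AB.1, ∀ b ∈ AB.2, (f s(a, b)).1 ≠ 0)).card
            ≤ (M-1)^(m*m) * M^(NN - m*m) := by
        intro AB
        by_cases hok : Disjoint AB.1 AB.2 ∧ AB.1.card = m ∧ AB.2.card = m
        · obtain ⟨hdj, hc1, hc2⟩ := hok
          set S' : Finset (Sym2 (Fin n)) :=
            (AB.1 ×ˢ AB.2).image (fun p : Fin n × Fin n => s(p.1, p.2)) with hS'def
          have hS'card : S'.card = m * m := hprodcard AB.1 AB.2 hdj hc1 hc2
          have hsubev : ((univ : Finset (Sym2 (Fin n) → Fin M)).filter (fun f =>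
              Disjoint AB.1 AB.2 ∧ AB.1.card = m ∧ AB.2.card = m ∧
                ∀ a ∈ AB.1, ∀ b ∈ AB.2, (f s(a, b)).1 ≠ 0))
              ⊆ ((univ : Finset (Sym2 (Fin n) → Fin M)).filter
                (fun f => ∀ e ∈ S', (f e).1 ≠ 0)) := by
            intro f hf
            obtain ⟨-, -, -, h⟩ := (mem_filter.mp hf).2
            refine mem_filter.mpr ⟨mem_univ _, ?_⟩
            intro e he
            simp only [hS'def] at he
            obtain ⟨p, hp, rfl⟩ := Finset.mem_image.mp he
            obtain ⟨hp1, hp2⟩ := Finset.mem_product.mp hp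
            exact h p.1 hp1 p.2 hp2
          calc ((univ : Finset (Sym2 (Fin n) → Fin M)).filter (fun f =>
              Disjoint AB.1 AB.2 ∧ AB.1.card = m ∧ AB.2.card = m ∧
                ∀ a ∈ AB.1, ∀ b ∈ AB.2, (f s(a, b)).1 ≠ 0)).card
              ≤ _ := card_le_card hsubev
            _ ≤ (M-1) ^ S'.card * M ^ (Fintype.card (Sym2 (Fin n)) - S'.card) :=
                count_nonzero_le hMpos S'
            _ = (M-1)^(m*m) * M^(NN - m*m) := by rw [hS'card, hNNdef]
        · have : ((univ : Finset (Sym2 (Fin n) → Fin M)).filter (fun f =>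
              Disjoint AB.1 AB.2 ∧ AB.1.card = m ∧ AB.2.card = m ∧
                ∀ a ∈ AB.1, ∀ b ∈ AB.2, (f s(a, b)).1 ≠ 0)) = ∅ := by
            refine Finset.filter_false_of_mem ?_
            intro f _ hcon
            exact hok ⟨hcon.1, hcon.2.1, hcon.2.2.1⟩
          rw [this]
          simp
      have hcount : BadP.card ≤ (2^n * 2^n) * ((M-1)^(m*m) * M^(NN - m*m)) := by
        calc BadP.card
            ≤ ∑ AB ∈ (univ : Finset (Finset (Fin n) × Finset (Fin n))),
              ((univ : Finset (Sym2 (Fin n) → Fin M)).filter (fun f =>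
                Disjoint AB.1 AB.2 ∧ AB.1.card = m ∧ AB.2.card = m ∧
                  ∀ a ∈ AB.1, ∀ b ∈ AB.2, (f s(a, b)).1 ≠ 0)).card :=
              le_trans (card_le_card hcover) Finset.card_biUnion_le
          _ ≤ ∑ _AB ∈ (univ : Finset (Finset (Fin n) × Finset (Fin n))),
              (M-1)^(m*m) * M^(NN - m*m) := Finset.sum_le_sum (fun AB _ => hper AB)
          _ = (2^n * 2^n) * ((M-1)^(m*m) * M^(NN - m*m)) := by
              rw [Finset.sum_const, smul_eq_mul, card_univ, Fintype.card_prod,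
                Fintype.card_finset, Fintype.card_fin]
      have hq : 2*n+3 ≤ (m*m)/M := (Nat.le_div_iff_mul_le hMpos).mpr hm2M
      have hP2 : 0 < (M-1)^(m*m) := pow_pos (by omega) _
      have hstep : 2^(2*n+2) * (M-1)^(m*m) < M^(m*m) := by
        have h2q : (2:ℕ)^(2*n+2) < 2^((m*m)/M) :=
          Nat.pow_lt_pow_right (by omega) (by omega)
        calc 2^(2*n+2) * (M-1)^(m*m) < 2^((m*m)/M) * (M-1)^(m*m) :=
              (Nat.mul_lt_mul_right hP2).mpr h2q
          _ ≤ M^(m*m) := pow_div_mul_le (by omega) (m*m)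
      calc 4 * BadP.card ≤ 4 * ((2^n * 2^n) * ((M-1)^(m*m) * M^(NN - m*m))) := by omega
        _ = (2^(2*n+2) * (M-1)^(m*m)) * M^(NN - m*m) := by ring
        _ < M^(m*m) * M^(NN - m*m) :=
            (Nat.mul_lt_mul_right (pow_pos hMpos _)).mpr hstep
        _ = M^NN := by rw [← pow_add, Nat.add_sub_cancel' hmmNN]
    · have : BadP = ∅ := Finset.not_nonempty_iff_eq_empty.mp hex
      rw [this]
      simpa using hMNNpos
  -- a good f exists
  have hcardΩ : Fintype.card (Sym2 (Fin n) → Fin M) = M ^ NN := by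
    rw [Fintype.card_fun, Fintype.card_fin]
  have hlt : (Bad1 ∪ BadD ∪ BadP).card < M ^ NN := by
    calc (Bad1 ∪ BadD ∪ BadP).card ≤ (Bad1 ∪ BadD).card + BadP.card := card_union_le _ _
      _ ≤ Bad1.card + BadD.card + BadP.card := by
          have := card_union_le Bad1 BadD
          omega
      _ < M ^ NN := by omega
  have hnotsub : ¬ (univ : Finset (Sym2 (Fin n) → Fin M)) ⊆ (Bad1 ∪ BadD ∪ BadP) := by
    intro hsub
    have := card_le_card hsub
    rw [card_univ, hcardΩ] at this
    omega
  obtain ⟨f, -, hfgood⟩ := Finset.not_subset.mp hnotsub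
  have hf1 : f ∉ Bad1 := fun h => hfgood (mem_union_left _ (mem_union_left _ h))
  have hfD : f ∉ BadD := fun h => hfgood (mem_union_left _ (mem_union_right _ h))
  have hfP : f ∉ BadP := fun h => hfgood (mem_union_right _ h)
  -- the transversal T
  set T : Finset (Fin n) := (Finset.Icc 3 k).biUnion (fun ℓ =>
    if h : 0 < ℓ then
      (((univ : Finset (Fin ℓ → Fin n)).filter
        (fun c => IsCycF (graphOf n M f) ℓ c)).image (fun c => c ⟨0, h⟩))
    else ∅) with hTdef
  have hTcard : T.card ≤ Q := by
    have h1 : T.card ≤ ∑ ℓ ∈ Finset.Icc 3 k, cycCount ℓ f := by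
      refine le_trans (Finset.card_biUnion_le) (Finset.sum_le_sum ?_)
      intro ℓ hℓ
      by_cases h : 0 < ℓ
      · rw [dif_pos h]
        exact Finset.card_image_le
      · rw [dif_neg h]
        simp
    have h2 : tc f ≤ Q := by
      by_contra hcon
      exact hf1 (mem_filter.mpr ⟨mem_univ _, by omega⟩)
    exact le_trans h1 h2
  set G : SimpleGraph (Fin n) := pruned (graphOf n M f) T with hGdef
  refine ⟨n, G, ⟨?_, ?_, ?_⟩, ?_⟩
  · rw [Fintype.card_fin]; omega
  · -- degrees
    intro v
    rw [Fintype.card_fin]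
    have hdeg : G.degree v < m := by
      have hsub : G.neighborFinset v ⊆ (univ : Finset (Fin n)).filter
          (fun w => (graphOf n M f).Adj v w) := by
        intro w hw
        rw [SimpleGraph.mem_neighborFinset] at hw
        exact mem_filter.mpr ⟨mem_univ _, (hw : _ ∧ _).1⟩
      have hD : ¬ (m ≤ ((univ : Finset (Fin n)).filter
          (fun w => (graphOf n M f).Adj v w)).card) := by
        intro hcon
        exact hfD (mem_filter.mpr ⟨mem_univ _, ⟨v, hcon⟩⟩)
      have := card_le_card hsub
      rw [← SimpleGraph.card_neighborFinset_eq_degree]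
      omega
    calc (G.degree v : ℝ) < (m:ℝ) := by exact_mod_cast hdeg
      _ ≤ ε * n := hmεn
  · -- no anticomplete pairs
    rintro ⟨A, B, hab, hanti, hA, hB⟩
    rw [Fintype.card_fin] at hA hB
    have hQr : (T.card : ℝ) ≤ (Q:ℝ) := by exact_mod_cast hTcard
    have hAT : m ≤ (A \ T).card := by
      have h1 : A.card ≤ (A \ T).card + T.card := Finset.card_le_card_sdiff_add_card
      have h2 : ((A \ T).card : ℝ) ≥ (A.card : ℝ) - T.card := by
        have : (A.card : ℝ) ≤ ((A \ T).card : ℝ) + T.card := by exact_mod_cast h1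
        linarith
      have : (m:ℝ) ≤ ((A \ T).card : ℝ) := by linarith
      exact_mod_cast this
    have hBT : m ≤ (B \ T).card := by
      have h1 : B.card ≤ (B \ T).card + T.card := Finset.card_le_card_sdiff_add_card
      have h2 : ((B \ T).card : ℝ) ≥ (B.card : ℝ) - T.card := by
        have : (B.card : ℝ) ≤ ((B \ T).card : ℝ) + T.card := by exact_mod_cast h1
        linarith
      have : (m:ℝ) ≤ ((B \ T).card : ℝ) := by linarith
      exact_mod_cast this
    obtain ⟨A'', hA''sub, hA''card⟩ := Finset.exists_subset_card_eq hAT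
    obtain ⟨B'', hB''sub, hB''card⟩ := Finset.exists_subset_card_eq hBT
    have hd'' : Disjoint A'' B'' :=
      hab.mono (hA''sub.trans (Finset.sdiff_subset)) (hB''sub.trans (Finset.sdiff_subset))
    have hP : ¬ (∀ a ∈ A'', ∀ b ∈ B'', (f s(a, b)).1 ≠ 0) := by
      intro hcon
      exact hfP (mem_filter.mpr ⟨mem_univ _, ⟨(A'', B''), hd'', hA''card, hB''card, hcon⟩⟩)
    push_neg at hP
    obtain ⟨a, ha, b, hb, hzero⟩ := hP
    have haA : a ∈ A := (Finset.sdiff_subset) (hA''sub ha)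
    have hbB : b ∈ B := (Finset.sdiff_subset) (hB''sub hb)
    have hne : a ≠ b := by
      intro h
      exact (Finset.disjoint_left.mp hab haA) (h ▸ hbB)
    have haT : a ∉ T := (Finset.mem_sdiff.mp (hA''sub ha)).2
    have hbT : b ∉ T := (Finset.mem_sdiff.mp (hB''sub hb)).2
    exact hanti a haA b hbB (show (a ≠ b ∧ (f s(a, b)).1 = 0) ∧ a ∉ T ∧ b ∉ T from ⟨⟨hne, hzero⟩, haT, hbT⟩)
  · -- no short cycles
    rintro ℓ h3 hk c ⟨hinj, hadj⟩
    have hcyc0 : IsCycF (graphOf n M f) ℓ c := ⟨hinj, fun i => (hadj i : _ ∧ _).1⟩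
    have h0 : (0:ℕ) < ℓ := by omega
    have hmem : c ⟨0, h0⟩ ∈ T := by
      rw [hTdef]
      refine Finset.mem_biUnion.mpr ⟨ℓ, Finset.mem_Icc.mpr ⟨h3, hk⟩, ?_⟩
      rw [dif_pos h0]
      exact Finset.mem_image_of_mem _ (mem_filter.mpr ⟨mem_univ _, hcyc0⟩)
    exact (hadj ⟨0, h0⟩ : _ ∧ _ ∧ _).2.1 hmem

theorem stmt1 {W : Type*} [Fintype W] (H : SimpleGraph W) (hH : ¬ H.IsAcyclic)
    (ε : ℝ) (hε : 0 < ε) :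
    ∃ (n : ℕ) (G : SimpleGraph (Fin n)), Coherent G ε ∧ ¬ Contains G H := by
  obtain ⟨n, G, hcoh, hnocyc⟩ := main_construction ε hε (Fintype.card W)
  refine ⟨n, G, hcoh, ?_⟩
  rintro ⟨φ, hφ⟩
  have hex : ∃ (v : W) (p : H.Walk v v), p.IsCycle := by
    by_contra hcon
    push_neg at hcon
    exact hH (fun v c hc => hcon v c hc)
  obtain ⟨v, p, hp⟩ := hex
  obtain ⟨h3, hle, hinj, hadj⟩ := isCycF_of_cycle hp
  exact hnocyc p.length h3 hle (fun i => φ (p.getVert i.1))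
    ⟨φ.injective.comp hinj, fun i => (hφ _ _).mpr (hadj i)⟩
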